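/- Let a < 0, 0 < η < 1, κ a measure on (0,∞) integrating x ↦ x ∧ x² with κ(ℝ) ∈ (0,∞]. With δ := 1 + 4/κ(ℝ) + inf{x : κ((0,x]) ≥ κ(ℝ)/2} and b := (δ − a + 2/η)², define Y(x) := 1 + (1/(√b κ((b,∞)))) 1_{(b,∞)}(x) − (1/(√b κ((0,δ]))) 1_{(0,δ]}(x) (the negative term omitted if κ(ℝ)=∞). Then a + ∫ x (Y(x)−1) κ(dx) ≥ a + √b − δ/√b ≥ 0. -/

import Mathlib

open MeasureTheory
open scoped NNReal ENNReal

/-- Let `a < 0`, `0 < η < 1` and let `κ` be a measure on `(0,∞)` integrating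
`x ↦ x ∧ x²`, with `κ(ℝ) ∈ (0,∞]` and unbounded support (the case `ℓ = 0, r = ∞` of the
paper).  With `δ := 1 + 4/κ(ℝ) + inf{x | κ((0,x]) ≥ κ(ℝ)/2}`, `b := (δ − a + 2/η)²`, and
`Y(x) := 1 + 1_(b,∞)(x)/(√b κ((b,∞))) − 1_(0,δ](x)/(√b κ((0,δ]))` (the negative term omitted
when `κ(ℝ) = ∞`), the modified drift satisfies
`a + ∫ x (Y(x) − 1) κ(dx) ≥ a + √b − δ/√b ≥ 0`. -/
theorem stmt9 (κ : Measure ℝ)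
    (hsupp : κ (Set.Iic 0) = 0)
    (hκint : ∫⁻ x, ENNReal.ofReal (min x (x ^ 2)) ∂κ < ⊤)
    (hpos : 0 < κ Set.univ)
    (hub : ∀ c : ℝ, 0 < c → 0 < κ (Set.Ioi c))
    (a η : ℝ) (ha : a < 0) (hη0 : 0 < η) (hη1 : η < 1)
    (δ b : ℝ)
    (hδ : δ = 1 + 4 / (κ Set.univ).toReal +
      sInf {x : ℝ | (κ Set.univ).toReal / 2 ≤ (κ (Set.Ioc 0 x)).toReal})
    (hb : b = (δ - a + 2 / η) ^ 2)
    (Y : ℝ → ℝ)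
    (hY : ∀ x, Y x = 1 + Set.indicator (Set.Ioi b)
        (fun _ => 1 / (Real.sqrt b * (κ (Set.Ioi b)).toReal)) x
      - (if κ Set.univ = ⊤ then 0 else
          Set.indicator (Set.Ioc 0 δ)
            (fun _ => 1 / (Real.sqrt b * (κ (Set.Ioc 0 δ)).toReal)) x)) :
    a + Real.sqrt b - δ / Real.sqrt b ≤ a + ∫ x, x * (Y x - 1) ∂κ ∧
      0 ≤ a + Real.sqrt b - δ / Real.sqrt b := by
  set s : ℝ := δ - a + 2 / η with hs
  -- the infimum is nonnegative
  have hsInf0 : 0 ≤ sInf {x : ℝ | (κ Set.univ).toReal / 2 ≤ (κ (Set.Ioc 0 x)).toReal} := by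
    by_cases htop : κ Set.univ = ⊤
    · have hset : {x : ℝ | (κ Set.univ).toReal / 2 ≤ (κ (Set.Ioc 0 x)).toReal} = Set.univ := by
        ext x
        simp [htop, ENNReal.toReal_nonneg]
      rw [hset, Real.sInf_of_not_bddBelow]
      rintro ⟨c, hc⟩
      have := hc (Set.mem_univ (c - 1))
      linarith
    · refine Real.sInf_nonneg fun x hx => ?_
      by_contra hx0
      push_neg at hx0
      have hempty : Set.Ioc (0 : ℝ) x = ∅ := Set.Ioc_eq_empty (by linarith)
      have hκu : 0 < (κ Set.univ).toReal := ENNReal.toReal_pos hpos.ne' htop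
      simp only [Set.mem_setOf_eq, hempty, measure_empty, ENNReal.toReal_zero] at hx
      linarith
  have hδ1 : (1 : ℝ) ≤ δ := by
    have h4 : 0 ≤ 4 / (κ Set.univ).toReal := by positivity
    rw [hδ]; linarith
  have hη2 : (2 : ℝ) ≤ 2 / η := by
    rw [le_div_iff₀ hη0]; nlinarith
  have hs1 : (1 : ℝ) < s := by rw [hs]; linarith
  have hs0 : (0 : ℝ) < s := by linarith
  have hδs : δ < s := by rw [hs]; linarith
  have hsb : Real.sqrt b = s := by rw [hb]; exact Real.sqrt_sq (by linarith)
  have hbs : b = s ^ 2 := hb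
  have hb1 : (1 : ℝ) < b := by rw [hbs]; nlinarith
  have hb0 : (0 : ℝ) < b := by linarith
  -- second inequality
  have h2 : 0 ≤ a + Real.sqrt b - δ / Real.sqrt b := by
    rw [hsb]
    have hds : δ / s ≤ 1 := (div_le_one hs0).mpr hδs.le
    linarith
  refine ⟨?_, h2⟩
  -- the main inequality
  have hmeasA : MeasurableSet (Set.Ioi b) := measurableSet_Ioi
  have hApos : 0 < κ (Set.Ioi b) := hub b hb0
  -- the lintegral of x over (b, ∞) is finite
  have hAb : ∫⁻ x in Set.Ioi b, ENNReal.ofReal x ∂κ < ⊤ := by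
    refine lt_of_le_of_lt (le_trans ?_ (setLIntegral_le_lintegral (Set.Ioi b) _)) hκint
    refine setLIntegral_mono (by fun_prop) fun x hx => ?_
    have hx1 : 1 < x := lt_trans hb1 hx
    exact ENNReal.ofReal_le_ofReal (le_min le_rfl (by nlinarith))
  have hgeA : ENNReal.ofReal b * κ (Set.Ioi b) ≤ ∫⁻ x in Set.Ioi b, ENNReal.ofReal x ∂κ := by
    rw [← setLIntegral_const]
    exact setLIntegral_mono (by fun_prop) fun x hx => ENNReal.ofReal_le_ofReal hx.le
  have hAfin : κ (Set.Ioi b) < ⊤ := by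
    by_contra h
    push_neg at h
    have hAtop : κ (Set.Ioi b) = ⊤ := top_le_iff.mp h
    rw [hAtop, ENNReal.mul_top (by simpa using (ENNReal.ofReal_pos.mpr hb0).ne')] at hgeA
    exact absurd (top_le_iff.mp hgeA) hAb.ne
  set κAR : ℝ := (κ (Set.Ioi b)).toReal with hκAR
  have hARpos : 0 < κAR := ENNReal.toReal_pos hApos.ne' hAfin.ne
  -- integrability of x on (b, ∞)
  have hintA : IntegrableOn (fun x => x) (Set.Ioi b) κ := by
    refine ⟨measurable_id.aestronglyMeasurable, ?_⟩
    rw [hasFiniteIntegral_iff_ofReal ?_]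
    · exact hAb
    · exact (ae_restrict_iff' hmeasA).mpr (ae_of_all _ fun x hx => (lt_trans hb0 hx).le)
  -- lower bound for the integral over (b, ∞)
  have hAlow : b * κAR ≤ ∫ x in Set.Ioi b, x ∂κ :=
    setIntegral_ge_of_const_le_real hmeasA hAfin.ne (fun x hx => hx.le) hintA
  set c₁ : ℝ := 1 / (s * κAR) with hc₁
  have hc₁pos : 0 < c₁ := by positivity
  have h1 : s ≤ ∫ x, (Set.Ioi b).indicator (fun y => y * c₁) x ∂κ := by
    rw [integral_indicator hmeasA, integral_mul_const]
    have : (b * κAR) * c₁ ≤ (∫ x in Set.Ioi b, x ∂κ) * c₁ :=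
      mul_le_mul_of_nonneg_right hAlow hc₁pos.le
    have heq : (b * κAR) * c₁ = s := by
      rw [hc₁, hbs]; field_simp
    linarith
  -- rewrite the integrand
  have hδ0 : (0 : ℝ) < δ := by linarith
  set c₂ : ℝ := 1 / (s * (κ (Set.Ioc 0 δ)).toReal) with hc₂
  have hintegrand : ∀ x, x * (Y x - 1) =
      (Set.Ioi b).indicator (fun y => y * c₁) x -
      (if κ Set.univ = ⊤ then 0 else (Set.Ioc 0 δ).indicator (fun y => y * c₂) x) := by
    intro x
    rw [hY x, hsb]
    by_cases htop : κ Set.univ = ⊤ <;>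
      simp only [htop, if_true, if_false, Set.indicator_apply] <;>
      split_ifs <;> ring
  rw [hsb]
  by_cases htop : κ Set.univ = ⊤
  · -- infinite total mass: the negative part is absent
    have : ∫ x, x * (Y x - 1) ∂κ = ∫ x, (Set.Ioi b).indicator (fun y => y * c₁) x ∂κ := by
      congr 1; funext x; rw [hintegrand x, if_pos htop, sub_zero]
    rw [this]
    have hds : 0 ≤ δ / s := by positivity
    have h3 : a + s - δ / s ≤ a + s := by linarith
    exact le_trans h3 (add_le_add_right h1 a)
  · haveI : IsFiniteMeasure κ := ⟨Ne.lt_top htop⟩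
    have hmeasB : MeasurableSet (Set.Ioc (0 : ℝ) δ) := measurableSet_Ioc
    have hBfin : κ (Set.Ioc 0 δ) < ⊤ := measure_lt_top κ _
    set κBR : ℝ := (κ (Set.Ioc 0 δ)).toReal with hκBR
    have hκBR0 : 0 ≤ κBR := ENNReal.toReal_nonneg
    -- integrability of x on (0, δ]
    have hintB : IntegrableOn (fun x => x) (Set.Ioc 0 δ) κ := by
      refine Integrable.mono' (integrable_const δ) measurable_id.aestronglyMeasurable ?_
      refine (ae_restrict_iff' hmeasB).mpr (ae_of_all _ fun x hx => ?_)
      rw [Real.norm_eq_abs, abs_of_pos hx.1]; exact hx.2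
    have hc₂0 : 0 ≤ c₂ := by positivity
    have hBup : ∫ x in Set.Ioc 0 δ, x ∂κ ≤ δ * κBR := by
      have := setIntegral_mono_on hintB (integrable_const δ) hmeasB
        (fun x hx => hx.2)
      simpa [setIntegral_const, smul_eq_mul, mul_comm, Measure.real] using this
    have h2int : ∫ x, (Set.Ioc 0 δ).indicator (fun y => y * c₂) x ∂κ ≤ δ / s := by
      rw [integral_indicator hmeasB, integral_mul_const]
      rcases eq_or_lt_of_le hκBR0 with h0 | hBRpos
      · rw [hc₂, ← h0]
        simp [div_nonneg hδ0.le hs0.le]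
      · have hle : (∫ x in Set.Ioc 0 δ, x ∂κ) * c₂ ≤ (δ * κBR) * c₂ :=
          mul_le_mul_of_nonneg_right hBup hc₂0
        have heq : (δ * κBR) * c₂ = δ / s := by
          rw [hc₂]; field_simp
        linarith
    -- integrability of the two indicator pieces
    have hintf₁ : Integrable ((Set.Ioi b).indicator (fun y => y * c₁)) κ :=
      (integrable_indicator_iff hmeasA).mpr (hintA.mul_const c₁)
    have hintf₂ : Integrable ((Set.Ioc (0:ℝ) δ).indicator (fun y => y * c₂)) κ :=
      (integrable_indicator_iff hmeasB).mpr (hintB.mul_const c₂)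
    have hsplit : ∫ x, x * (Y x - 1) ∂κ =
        (∫ x, (Set.Ioi b).indicator (fun y => y * c₁) x ∂κ) -
        ∫ x, (Set.Ioc 0 δ).indicator (fun y => y * c₂) x ∂κ := by
      rw [show (fun x => x * (Y x - 1)) =
          fun x => (Set.Ioi b).indicator (fun y => y * c₁) x -
            (Set.Ioc 0 δ).indicator (fun y => y * c₂) x by
          funext x; rw [hintegrand x, if_neg htop]]
      exact integral_sub hintf₁ hintf₂
    rw [hsplit]
    have h3 : a + s - δ / s ≤ a + (s - δ / s) := by ring_nf; exact le_refl _
    refine le_trans h3 (add_le_add_right ?_ a)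
    exact sub_le_sub h1 h2int
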